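/- arXiv:2403.08450 — 2 statements merged into one kernel-verified Lean document; each statement's English description precedes it below -/
import Mathlib

section
/- Let f ∈ L¹(ℝ³) be supported in B(0,R), let k > 0 be fixed, and define H(θ,φ) = ∫_{ℝ³} e^{-ik x̂(θ,φ)·y} f(y) dy where x̂(θ,φ) = (cos θ cos φ, sin θ cos φ, sin φ). Let n₀ ∈ ℕ be such that (2k)^{n₀}/n₀! = sup_{n∈ℕ} (2k)ⁿ/n!. Then for every multi-index β ∈ ℕ₀² and all (θ,φ), |∂^β H(θ,φ)| ≤ M₂ · (2R)^{|β|} · β!, where M₂ = max{(2k)^{n₀}/n₀!, 1} · ‖f‖_{L¹(ℝ³)}. -/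
open MeasureTheory Real

/-- Partial derivative in the first (θ) variable. -/
noncomputable def pdTheta (H : ℝ → ℝ → ℂ) : ℝ → ℝ → ℂ :=
  fun θ φ => deriv (fun t => H t φ) θ

/-- Partial derivative in the second (φ) variable. -/
noncomputable def pdPhi (H : ℝ → ℝ → ℂ) : ℝ → ℝ → ℂ :=
  fun θ φ => deriv (fun t => H θ t) φ

namespace ADB

/-- Number of surjections from an `N`-set onto a `j`-set. -/
def surjN : ℕ → ℕ → ℕ
  | 0, 0 => 1
  | 0, _+1 => 0
  | _+1, 0 => 0
  | N+1, j+1 => (j+1) * (surjN N (j+1) + surjN N j)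

lemma surjN_zero_of_lt : ∀ N j, N < j → surjN N j = 0
  | 0, _+1, _ => rfl
  | N+1, j+1, h => by
      have h1 : N < j + 1 := by omega
      have h2 : N < j := by omega
      simp [surjN, surjN_zero_of_lt N (j+1) h1, surjN_zero_of_lt N j h2]

/-- First-block decomposition identity for surjection numbers. -/
lemma surjN_fb : ∀ N j, surjN (N+1) (j+1) =
    ∑ i ∈ Finset.range (N+1), (N+1).choose (i+1) * surjN (N - i) j := by
  intro N
  induction N with
  | zero =>
      intro j
      cases j with
      | zero => simp [surjN]
      | succ j => simp [surjN, surjN_zero_of_lt 0 (j+1) (by omega)]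
  | succ N IH =>
      intro j
      have pascal : ∀ i, (N+2).choose (i+1) = (N+1).choose i + (N+1).choose (i+1) := by
        intro i; rw [Nat.choose_succ_succ]
      have hsplit : ∑ i ∈ Finset.range (N+2), (N+2).choose (i+1) * surjN (N+1 - i) j
          = (∑ i ∈ Finset.range (N+2), (N+1).choose i * surjN (N+1 - i) j)
            + ∑ i ∈ Finset.range (N+2), (N+1).choose (i+1) * surjN (N+1 - i) j := by
        rw [← Finset.sum_add_distrib]
        apply Finset.sum_congr rfl
        intro i _
        rw [pascal i, add_mul]
      have hB : ∑ i ∈ Finset.range (N+2), (N+1).choose i * surjN (N+1 - i) j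
          = surjN (N+1) j + surjN (N+1) (j+1) := by
        rw [Finset.sum_range_succ' (fun i => (N+1).choose i * surjN (N+1 - i) j) (N+1)]
        simp only [Nat.choose_zero_right, one_mul, Nat.sub_zero]
        have hidx : ∀ i ∈ Finset.range (N+1), (N+1).choose (i+1) * surjN (N+1 - (i+1)) j
            = (N+1).choose (i+1) * surjN (N - i) j := by
          intro i hi
          have : N + 1 - (i + 1) = N - i := by omega
          rw [this]
        rw [Finset.sum_congr rfl hidx, ← IH j]
        exact Nat.add_comm _ _
      have hA : ∑ i ∈ Finset.range (N+2), (N+1).choose (i+1) * surjN (N+1 - i) j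
          = ∑ i ∈ Finset.range (N+1), (N+1).choose (i+1) * surjN (N+1 - i) j := by
        rw [Finset.sum_range_succ]
        simp [Nat.choose_eq_zero_of_lt (by omega : N + 1 < N + 2)]
      rw [hsplit, hB, hA]
      cases j with
      | zero =>
          have hz : ∑ i ∈ Finset.range (N+1), (N+1).choose (i+1) * surjN (N+1 - i) 0 = 0 := by
            apply Finset.sum_eq_zero
            intro i hi
            simp only [Finset.mem_range] at hi
            have : N + 1 - i = (N - i) + 1 := by omega
            rw [this]
            simp [surjN]
          rw [hz]
          show (0+1) * (surjN (N+1) (0+1) + surjN (N+1) 0) = _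
          ring
      | succ j' =>
          have hexp : ∑ i ∈ Finset.range (N+1), (N+1).choose (i+1) * surjN (N+1 - i) (j'+1)
              = (j'+1) * (surjN (N+1) (j'+2) + surjN (N+1) (j'+1)) := by
            have : ∀ i ∈ Finset.range (N+1),
                (N+1).choose (i+1) * surjN (N+1 - i) (j'+1)
                = (j'+1) * ((N+1).choose (i+1) * surjN (N - i) (j'+1))
                  + (j'+1) * ((N+1).choose (i+1) * surjN (N - i) j') := by
              intro i hi
              simp only [Finset.mem_range] at hi
              have h1 : N + 1 - i = (N - i) + 1 := by omega
              rw [h1]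
              show (N+1).choose (i+1) * ((j'+1) * (surjN (N-i) (j'+1) + surjN (N-i) j')) = _
              ring
            rw [Finset.sum_congr rfl this, Finset.sum_add_distrib, ← Finset.mul_sum,
              ← Finset.mul_sum, ← IH (j'+1), ← IH j']
            ring
          rw [hexp]
          show (j'+1+1) * (surjN (N+1) (j'+1+1) + surjN (N+1) (j'+1)) = _
          ring

lemma surjN_zz : surjN 0 0 = 1 := rfl
lemma surjN_zs (j : ℕ) : surjN 0 (j+1) = 0 := rfl
lemma surjN_sz (N : ℕ) : surjN (N+1) 0 = 0 := rfl
lemma surjN_ss (N j : ℕ) : surjN (N+1) (j+1) = (j+1) * (surjN N (j+1) + surjN N j) := rfl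

/-- weighted ordered-Bell-type sum -/
noncomputable def bfun (N : ℕ) : ℝ :=
  ∑ j ∈ Finset.range (N+1), (surjN N j : ℝ) * (2:ℝ)⁻¹ ^ j

lemma bfun_zero : bfun 0 = 1 := by
  simp [bfun, surjN_zz]

lemma bfun_extend (N M : ℕ) (h : N ≤ M) :
    bfun N = ∑ j ∈ Finset.range (M+1), (surjN N j : ℝ) * (2:ℝ)⁻¹ ^ j := by
  unfold bfun
  apply Finset.sum_subset
  · exact Finset.range_subset_range.2 (by omega)
  · intro j hj hnj
    simp only [Finset.mem_range] at hj hnj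
    rw [surjN_zero_of_lt N j (by omega)]
    simp

lemma bfun_succ (N : ℕ) : bfun (N+1)
    = 2⁻¹ * ∑ i ∈ Finset.range (N+1), ((N+1).choose (i+1) : ℝ) * bfun (N - i) := by
  conv_lhs => rw [bfun]
  rw [Finset.sum_range_succ' (fun j => (surjN (N+1) j : ℝ) * (2:ℝ)⁻¹ ^ j) (N+1)]
  rw [surjN_sz N]
  simp only [Nat.cast_zero, zero_mul, pow_zero, mul_one, add_zero]
  have hstep : ∀ j ∈ Finset.range (N+1),
      (surjN (N+1) (j+1) : ℝ) * (2:ℝ)⁻¹ ^ (j+1)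
      = 2⁻¹ * ∑ i ∈ Finset.range (N+1),
          ((N+1).choose (i+1) : ℝ) * ((surjN (N - i) j : ℝ) * (2:ℝ)⁻¹ ^ j) := by
    intro j hj
    rw [surjN_fb N j]
    push_cast
    rw [Finset.sum_mul, Finset.mul_sum]
    apply Finset.sum_congr rfl
    intro i _
    ring
  rw [Finset.sum_congr rfl hstep, ← Finset.mul_sum, Finset.sum_comm]
  congr 1
  apply Finset.sum_congr rfl
  intro i hi
  simp only [Finset.mem_range] at hi
  rw [← Finset.mul_sum, bfun_extend (N - i) N (by omega)]

lemma two_pow_le_factorial_succ : ∀ i : ℕ, 2 ^ i ≤ (i+1).factorial := by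
  intro i
  induction i with
  | zero => simp
  | succ i IH =>
      rw [pow_succ, Nat.factorial_succ]
      calc 2 ^ i * 2 ≤ (i+1).factorial * 2 := by omega
      _ ≤ (i + 1 + 1) * (i+1).factorial := by nlinarith
lemma bfun_nonneg (N : ℕ) : 0 ≤ bfun N := by
  unfold bfun
  apply Finset.sum_nonneg
  intro j _
  positivity

lemma bfun_le_factorial : ∀ N, bfun N ≤ N.factorial := by
  intro N
  induction N using Nat.strong_induction_on with
  | _ N IH =>
    match N with
    | 0 => rw [bfun_zero]; simp
    | (N+1) =>
      rw [bfun_succ]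
      have h1 : ∑ i ∈ Finset.range (N+1), ((N+1).choose (i+1) : ℝ) * bfun (N - i)
          ≤ ∑ i ∈ Finset.range (N+1), ((N+1).factorial : ℝ) * (2:ℝ)⁻¹ ^ i := by
        apply Finset.sum_le_sum
        intro i hi
        simp only [Finset.mem_range] at hi
        have hb : bfun (N - i) ≤ ((N - i).factorial : ℝ) := IH (N - i) (by omega)
        have h2 : ((N+1).choose (i+1) : ℝ) * bfun (N - i)
            ≤ ((N+1).choose (i+1) : ℝ) * ((N - i).factorial : ℝ) := by
          apply mul_le_mul_of_nonneg_left hb (by positivity)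
        refine h2.trans ?_
        -- (N+1).choose (i+1) * (N-i)! * (i+1)! = (N+1)!
        have hkey : (N+1).choose (i+1) * (i+1).factorial * ((N+1) - (i+1)).factorial
            = (N+1).factorial := Nat.choose_mul_factorial_mul_factorial (by omega)
        have hNi : (N+1) - (i+1) = N - i := by omega
        rw [hNi] at hkey
        have hfact : ((N+1).choose (i+1) : ℝ) * ((N - i).factorial : ℝ)
            = ((N+1).factorial : ℝ) / ((i+1).factorial : ℝ) := by
          rw [eq_div_iff (by positivity)]
          push_cast [← hkey]
          ring
        rw [hfact]
        rw [div_le_iff₀ (by positivity)]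
        have h2pow : (2:ℝ) ^ i ≤ ((i+1).factorial : ℝ) := by
          exact_mod_cast two_pow_le_factorial_succ i
        calc ((N+1).factorial : ℝ) = (N+1).factorial * ((2:ℝ)⁻¹ ^ i * 2 ^ i) := by
              rw [inv_pow, inv_mul_cancel₀ (by positivity)]; ring
        _ ≤ (N+1).factorial * (2:ℝ)⁻¹ ^ i * (i+1).factorial := by
              rw [mul_assoc]
              apply mul_le_mul_of_nonneg_left _ (by positivity)
              exact mul_le_mul_of_nonneg_left h2pow (by positivity)
      have h3 : ∑ i ∈ Finset.range (N+1), ((N+1).factorial : ℝ) * (2:ℝ)⁻¹ ^ i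
          ≤ ((N+1).factorial : ℝ) * 2 := by
        rw [← Finset.mul_sum]
        apply mul_le_mul_of_nonneg_left _ (by positivity)
        have := sum_geometric_two_le (N+1)
        simp only [one_div] at this
        exact this
      calc 2⁻¹ * ∑ i ∈ Finset.range (N+1), ((N+1).choose (i+1) : ℝ) * bfun (N - i)
          ≤ 2⁻¹ * (((N+1).factorial : ℝ) * 2) := by
            apply mul_le_mul_of_nonneg_left (h1.trans h3) (by norm_num)
      _ = ((N+1).factorial : ℝ) := by ring


/-- bump the θ-index of each factor in turn -/
def bump1 : List (ℕ × ℕ) → List (List (ℕ × ℕ))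
  | [] => []
  | p :: L => ((p.1 + 1, p.2) :: L) :: (bump1 L).map (p :: ·)

def bump2 : List (ℕ × ℕ) → List (List (ℕ × ℕ))
  | [] => []
  | p :: L => ((p.1, p.2 + 1) :: L) :: (bump2 L).map (p :: ·)

def step1 (L : List (ℕ × ℕ)) : List (List (ℕ × ℕ)) := ((1,0) :: L) :: bump1 L
def step2 (L : List (ℕ × ℕ)) : List (List (ℕ × ℕ)) := ((0,1) :: L) :: bump2 L

/-- apply a step to each monomial and concatenate -/
def SS (g : List (ℕ × ℕ) → List (List (ℕ × ℕ))) : List (List (ℕ × ℕ)) → List (List (ℕ × ℕ))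
  | [] => []
  | L :: LS => g L ++ SS g LS

lemma bump1_lengths (L : List (ℕ × ℕ)) :
    (bump1 L).map List.length = List.replicate L.length L.length := by
  induction L with
  | nil => rfl
  | cons p L IH =>
      simp only [bump1, List.map_cons, List.length_cons, List.map_map]
      have : (List.length ∘ (p :: ·)) = (fun L' : List (ℕ×ℕ) => L'.length + 1) := by
        funext L'; simp
      rw [this]
      have : (fun L' : List (ℕ×ℕ) => L'.length + 1) = (fun n => n + 1) ∘ List.length := rfl
      rw [this, ← List.map_map, IH, List.map_replicate]
      rfl

lemma bump2_lengths (L : List (ℕ × ℕ)) :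
    (bump2 L).map List.length = List.replicate L.length L.length := by
  induction L with
  | nil => rfl
  | cons p L IH =>
      simp only [bump2, List.map_cons, List.length_cons, List.map_map]
      have : (List.length ∘ (p :: ·)) = (fun L' : List (ℕ×ℕ) => L'.length + 1) := by
        funext L'; simp
      rw [this]
      have : (fun L' : List (ℕ×ℕ) => L'.length + 1) = (fun n => n + 1) ∘ List.length := rfl
      rw [this, ← List.map_map, IH, List.map_replicate]
      rfl

def StepLen (g : List (ℕ × ℕ) → List (List (ℕ × ℕ))) : Prop :=
  ∀ L, (g L).map List.length = (L.length + 1) :: List.replicate L.length L.length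

lemma stepLen_step1 : StepLen step1 := by
  intro L; simp [step1, bump1_lengths]

lemma stepLen_step2 : StepLen step2 := by
  intro L; simp [step2, bump2_lengths]

/-- count of monomials of given length -/
def cnt (j : ℕ) (LL : List (List (ℕ × ℕ))) : ℕ := (LL.map List.length).count j

lemma cnt_SS_zero {g} (hg : StepLen g) : ∀ LL, cnt 0 (SS g LL) = 0 := by
  intro LL
  induction LL with
  | nil => rfl
  | cons L LS IH =>
      simp only [cnt, SS, List.map_append, List.count_append]
      rw [hg L]
      simp only [List.count_cons, List.count_replicate, beq_iff_eq]
      simp only [cnt] at IH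
      rw [IH]
      split_ifs <;> simp_all

lemma cnt_SS_succ {g} (hg : StepLen g) (j : ℕ) :
    ∀ LL, cnt (j+1) (SS g LL) = cnt j LL + (j+1) * cnt (j+1) LL := by
  intro LL
  induction LL with
  | nil => rfl
  | cons L LS IH =>
      have hhead : List.count (j+1) ((L.length + 1) :: List.replicate L.length L.length)
          = (if L.length = j then 1 else 0) + (j+1) * (if L.length = j+1 then 1 else 0) := by
        simp only [List.count_cons, List.count_replicate, beq_iff_eq]
        split_ifs <;> omega
      simp only [cnt, SS, List.map_append, List.count_append, List.map_cons, List.count_cons,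
        beq_iff_eq]
      rw [hg L, hhead]
      simp only [cnt] at IH
      rw [IH]
      ring


def Good (N : ℕ) (LL : List (List (ℕ × ℕ))) : Prop :=
  ∀ j, cnt j LL * j.factorial = surjN N j


lemma good_init : Good 0 [[]] := by
  intro j
  cases j with
  | zero => simp [cnt, surjN_zz]
  | succ j => simp [cnt, List.count_cons, surjN_zs]

lemma good_step {g} (hg : StepLen g) {N LL} (h : Good N LL) : Good (N+1) (SS g LL) := by
  intro j
  cases j with
  | zero => simp [cnt_SS_zero hg, surjN_sz]
  | succ j =>
      rw [cnt_SS_succ hg j LL, surjN_ss N j, ← h j, ← h (j+1), Nat.factorial_succ]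
      ring

lemma good_len_le {N LL} (h : Good N LL) : ∀ L ∈ LL, L.length ≤ N := by
  intro L hL
  by_contra hc
  push_neg at hc
  have hmem : L.length ∈ LL.map List.length := List.mem_map_of_mem hL
  have hpos : cnt L.length LL ≠ 0 := by
    simp only [cnt, Ne, List.count_eq_zero]
    exact fun hno => hno hmem
  have h0 : surjN N L.length = 0 := surjN_zero_of_lt N L.length (by omega)
  have := h L.length
  rw [h0] at this
  have : cnt L.length LL * (L.length).factorial ≠ 0 :=
    Nat.mul_ne_zero hpos (Nat.factorial_ne_zero _)
  omega


/-- total weight of a system of monomials -/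
noncomputable def Wt (x : ℝ) (LL : List (List (ℕ × ℕ))) : ℝ :=
  (LL.map (fun L => x ^ L.length)).sum

lemma Wt_nonneg {x : ℝ} (hx : 0 ≤ x) (LL : List (List (ℕ × ℕ))) : 0 ≤ Wt x LL := by
  apply List.sum_nonneg
  intro a ha
  simp only [List.mem_map] at ha
  obtain ⟨L, _, rfl⟩ := ha
  positivity

lemma sum_pow_group (x : ℝ) (N : ℕ) :
    ∀ l : List ℕ, (∀ a ∈ l, a ≤ N) →
      (l.map (fun j => x ^ j)).sum = ∑ j ∈ Finset.range (N+1), (l.count j : ℝ) * x ^ j := by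
  intro l
  induction l with
  | nil => simp
  | cons a l IH =>
      intro hl
      have ha : a ≤ N := hl a List.mem_cons_self
      have hIH := IH (fun b hb => hl b (List.mem_cons_of_mem a hb))
      simp only [List.map_cons, List.sum_cons, hIH, List.count_cons, beq_iff_eq]
      have : ∀ j ∈ Finset.range (N+1),
          ((l.count j + if a = j then 1 else 0 : ℕ) : ℝ) * x ^ j
          = (l.count j : ℝ) * x ^ j + (if a = j then 1 else 0 : ℝ) * x ^ j := by
        intro j _
        push_cast
        split_ifs <;> ring
      rw [Finset.sum_congr rfl this, Finset.sum_add_distrib]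
      have hsingle : ∑ j ∈ Finset.range (N+1), (if a = j then 1 else 0 : ℝ) * x ^ j = x ^ a := by
    
        rw [Finset.sum_congr rfl (fun j _ => by
          rw [show (if a = j then 1 else 0 : ℝ) * x ^ j = if a = j then x ^ j else 0 from by
            split_ifs <;> ring])]
        rw [Finset.sum_ite_eq (Finset.range (N+1)) a (fun j => x ^ j)]
        simp [Finset.mem_range, Nat.lt_succ_of_le ha]
      rw [hsingle]
      ring

lemma Wt_le_bfun {N : ℕ} {LL : List (List (ℕ × ℕ))} (h : Good N LL)
    {k R Mv : ℝ} (hk : 0 ≤ k) (hR : 1 ≤ R)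
    (hM : ∀ j : ℕ, (2*k) ^ j ≤ Mv * j.factorial) :
    Wt (k * R) LL ≤ Mv * R ^ N * N.factorial := by
  have hMv : (0:ℝ) ≤ Mv := by
    have := hM 0
    simp at this
    linarith
  have hlen : ∀ a ∈ LL.map List.length, a ≤ N := by
    intro a ha
    simp only [List.mem_map] at ha
    obtain ⟨L, hL, rfl⟩ := ha
    exact good_len_le h L hL
  have hW : Wt (k*R) LL = ∑ j ∈ Finset.range (N+1),
      ((LL.map List.length).count j : ℝ) * (k*R) ^ j := by
    unfold Wt
    rw [← sum_pow_group (k*R) N (LL.map List.length) hlen, List.map_map]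
    rfl
  rw [hW]
  have hterm : ∀ j ∈ Finset.range (N+1),
      ((LL.map List.length).count j : ℝ) * (k*R) ^ j
      ≤ Mv * R ^ N * ((surjN N j : ℝ) * (2:ℝ)⁻¹ ^ j) := by
    intro j hj
    simp only [Finset.mem_range] at hj
    have hcnt : ((LL.map List.length).count j : ℝ) * (j.factorial : ℝ) = (surjN N j : ℝ) := by
      exact_mod_cast congrArg (Nat.cast : ℕ → ℝ) (h j)
    have hkj : (k:ℝ) ^ j ≤ Mv * j.factorial * (2:ℝ)⁻¹ ^ j := by
      have h2 : (2*k) ^ j ≤ Mv * j.factorial := hM j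
      have : (k:ℝ) ^ j = (2*k) ^ j * (2:ℝ)⁻¹ ^ j := by
        rw [← mul_pow]
        congr 1
        ring
      rw [this]
      apply mul_le_mul_of_nonneg_right h2 (by positivity)
    have hRj : (R:ℝ) ^ j ≤ R ^ N := pow_le_pow_right₀ hR (by omega)
    calc ((LL.map List.length).count j : ℝ) * (k*R) ^ j
        = ((LL.map List.length).count j : ℝ) * (k ^ j * R ^ j) := by rw [mul_pow]
      _ ≤ ((LL.map List.length).count j : ℝ) * ((Mv * j.factorial * (2:ℝ)⁻¹ ^ j) * R ^ N) := by
          apply mul_le_mul_of_nonneg_left _ (by positivity)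
          apply mul_le_mul hkj hRj (by positivity)
          positivity
      _ = Mv * R ^ N * ((((LL.map List.length).count j : ℝ) * (j.factorial : ℝ)) * (2:ℝ)⁻¹ ^ j) := by
          ring
      _ = Mv * R ^ N * ((surjN N j : ℝ) * (2:ℝ)⁻¹ ^ j) := by rw [hcnt]
  calc ∑ j ∈ Finset.range (N+1), ((LL.map List.length).count j : ℝ) * (k*R) ^ j
      ≤ ∑ j ∈ Finset.range (N+1), Mv * R ^ N * ((surjN N j : ℝ) * (2:ℝ)⁻¹ ^ j) :=
        Finset.sum_le_sum hterm
    _ = Mv * R ^ N * bfun N := by rw [← Finset.mul_sum]; rfl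
    _ ≤ Mv * R ^ N * N.factorial := by
        apply mul_le_mul_of_nonneg_left (bfun_le_factorial N) (by positivity)

lemma factorial_split (m n : ℕ) :
    ((m+n).factorial : ℝ) ≤ 2 ^ (m+n) * (m.factorial * n.factorial) := by
  have hchoose : (m+n).choose m ≤ 2 ^ (m+n) := by
    calc (m+n).choose m ≤ ∑ i ∈ Finset.range (m+n+1), (m+n).choose i :=
          Finset.single_le_sum (f := fun i => (m+n).choose i) (fun i _ => Nat.zero_le _)
            (Finset.mem_range.2 (by omega))
      _ = 2 ^ (m+n) := Nat.sum_range_choose (m+n)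
  have hfact : (m+n).choose m * m.factorial * n.factorial = (m+n).factorial := by
    have := Nat.choose_mul_factorial_mul_factorial (le_of_eq rfl : m ≤ m)
    have h2 := Nat.choose_mul_factorial_mul_factorial (Nat.le_add_right m n)
    simpa using h2
  have : ((m+n).factorial : ℝ) = ((m+n).choose m : ℝ) * m.factorial * n.factorial := by
    exact_mod_cast congrArg (Nat.cast : ℕ → ℝ) hfact.symm
  rw [this]
  have h2R : ((m+n).choose m : ℝ) ≤ 2 ^ (m+n) := by exact_mod_cast hchoose
  have : ((m+n).choose m : ℝ) * m.factorial * n.factorial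
      ≤ 2 ^ (m+n) * m.factorial * n.factorial := by
    apply mul_le_mul_of_nonneg_right _ (by positivity)
    apply mul_le_mul_of_nonneg_right h2R (by positivity)
  linarith [this]

lemma Wt_le_final {m n : ℕ} {LL : List (List (ℕ × ℕ))} (h : Good (m+n) LL)
    {k R Mv : ℝ} (hk : 0 ≤ k) (hR : 1 ≤ R)
    (hM : ∀ j : ℕ, (2*k) ^ j ≤ Mv * j.factorial) :
    Wt (k * R) LL ≤ Mv * (2*R) ^ (m+n) * (m.factorial * n.factorial) := by
  have hMv : (0:ℝ) ≤ Mv := by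
    have := hM 0; simp at this; linarith
  calc Wt (k*R) LL ≤ Mv * R ^ (m+n) * ((m+n).factorial) := Wt_le_bfun h hk hR hM
    _ ≤ Mv * R ^ (m+n) * (2 ^ (m+n) * (m.factorial * n.factorial)) := by
        apply mul_le_mul_of_nonneg_left (factorial_split m n) (by positivity)
    _ = Mv * (2*R) ^ (m+n) * (m.factorial * n.factorial) := by
        rw [mul_pow]; ring


/-- iterated partial derivative of the phase -/
noncomputable def DD (a b c : ℝ) (i j : ℕ) (θ φ : ℝ) : ℝ :=
  (a * Real.cos (θ + i * (π / 2)) + b * Real.sin (θ + i * (π / 2))) * Real.cos (φ + j * (π / 2))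
    + (if i = 0 then c * Real.sin (φ + j * (π / 2)) else 0)

lemma DD_hasDerivAt_theta (a b c : ℝ) (i j : ℕ) (θ φ : ℝ) :
    HasDerivAt (fun t => DD a b c i j t φ) (DD a b c (i+1) j θ φ) θ := by
  have hid : HasDerivAt (fun t : ℝ => t + i * (π/2)) 1 θ := by
    simpa using (hasDerivAt_id θ).add_const ((i:ℝ) * (π/2))
  have hcos : HasDerivAt (fun t : ℝ => Real.cos (t + i * (π/2)))
      (-Real.sin (θ + i * (π/2))) θ := by
    simpa using hid.cos
  have hsin : HasDerivAt (fun t : ℝ => Real.sin (t + i * (π/2)))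
      (Real.cos (θ + i * (π/2))) θ := by
    simpa using hid.sin
  have hu : HasDerivAt (fun t : ℝ => a * Real.cos (t + i * (π/2)) + b * Real.sin (t + i * (π/2)))
      (a * (-Real.sin (θ + i * (π/2))) + b * Real.cos (θ + i * (π/2))) θ :=
    (hcos.const_mul a).add (hsin.const_mul b)
  have h1 : HasDerivAt (fun t => DD a b c i j t φ)
      ((a * (-Real.sin (θ + i * (π/2))) + b * Real.cos (θ + i * (π/2)))
        * Real.cos (φ + j * (π/2))) θ := by
    unfold DD
    exact (hu.mul_const _).add_const _
  convert h1 using 1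
  unfold DD
  have hcast : (((i+1 : ℕ)):ℝ) * (π/2) = (i:ℝ) * (π/2) + π/2 := by push_cast; ring
  have h2 : θ + ((i+1 : ℕ):ℝ) * (π/2) = (θ + (i:ℝ) * (π/2)) + π/2 := by rw [hcast]; ring
  rw [h2, Real.cos_add_pi_div_two, Real.sin_add_pi_div_two]
  simp only [if_neg (Nat.succ_ne_zero i)]
  ring

lemma DD_hasDerivAt_phi (a b c : ℝ) (i j : ℕ) (θ φ : ℝ) :
    HasDerivAt (fun t => DD a b c i j θ t) (DD a b c i (j+1) θ φ) φ := by
  have hid : HasDerivAt (fun t : ℝ => t + j * (π/2)) 1 φ := by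
    simpa using (hasDerivAt_id φ).add_const ((j:ℝ) * (π/2))
  have hcos : HasDerivAt (fun t : ℝ => Real.cos (t + j * (π/2)))
      (-Real.sin (φ + j * (π/2))) φ := by
    simpa using hid.cos
  have hsin : HasDerivAt (fun t : ℝ => Real.sin (t + j * (π/2)))
      (Real.cos (φ + j * (π/2))) φ := by
    simpa using hid.sin
  have hcast : (((j+1 : ℕ)):ℝ) * (π/2) = (j:ℝ) * (π/2) + π/2 := by push_cast; ring
  have h2 : φ + ((j+1 : ℕ):ℝ) * (π/2) = (φ + (j:ℝ) * (π/2)) + π/2 := by rw [hcast]; ring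
  by_cases hi : i = 0
  · subst hi
    have h1 : HasDerivAt
        (fun t => (a * Real.cos (θ + (0:ℕ) * (π/2)) + b * Real.sin (θ + (0:ℕ) * (π/2)))
            * Real.cos (t + j * (π/2)) + c * Real.sin (t + j * (π/2)))
        ((a * Real.cos (θ + (0:ℕ) * (π/2)) + b * Real.sin (θ + (0:ℕ) * (π/2)))
            * (-Real.sin (φ + j * (π/2))) + c * Real.cos (φ + j * (π/2))) φ :=
      (hcos.const_mul _).add (hsin.const_mul c)
    have hfun : (fun t => DD a b c 0 j θ t)
        = fun t => (a * Real.cos (θ + (0:ℕ) * (π/2)) + b * Real.sin (θ + (0:ℕ) * (π/2)))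
            * Real.cos (t + j * (π/2)) + c * Real.sin (t + j * (π/2)) := by
      funext t; unfold DD; norm_num
    rw [hfun]
    convert h1 using 1
    unfold DD
    rw [h2, Real.cos_add_pi_div_two, Real.sin_add_pi_div_two]
    norm_num
    try ring
  · have h1 : HasDerivAt
        (fun t => (a * Real.cos (θ + i * (π/2)) + b * Real.sin (θ + i * (π/2)))
            * Real.cos (t + j * (π/2)))
        ((a * Real.cos (θ + i * (π/2)) + b * Real.sin (θ + i * (π/2)))
            * (-Real.sin (φ + j * (π/2)))) φ := hcos.const_mul _
    have hfun : (fun t => DD a b c i j θ t)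
        = fun t => (a * Real.cos (θ + i * (π/2)) + b * Real.sin (θ + i * (π/2)))
            * Real.cos (t + j * (π/2)) := by
      funext t; unfold DD; rw [if_neg hi]; ring
    rw [hfun]
    convert h1 using 1
    unfold DD
    rw [h2, Real.cos_add_pi_div_two, Real.sin_add_pi_div_two, if_neg hi]
    ring

lemma DD_abs_le {a b c R : ℝ} (hR : 0 ≤ R) (h : a^2 + b^2 + c^2 ≤ R^2)
    (i j : ℕ) (θ φ : ℝ) : |DD a b c i j θ φ| ≤ R := by
  set X := θ + i * (π/2) with hX
  set Φ := φ + j * (π/2) with hΦ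
  set u := a * Real.cos X + b * Real.sin X with hu
  have e1 : Real.sin X ^ 2 + Real.cos X ^ 2 = 1 := Real.sin_sq_add_cos_sq X
  have e2 : Real.sin Φ ^ 2 + Real.cos Φ ^ 2 = 1 := Real.sin_sq_add_cos_sq Φ
  have idu : u^2 + (a * Real.sin X - b * Real.cos X)^2 = a^2 + b^2 := by
    rw [hu]; linear_combination (a^2 + b^2) * e1
  have idv : (u * Real.cos Φ + c * Real.sin Φ)^2 + (u * Real.sin Φ - c * Real.cos Φ)^2
      = u^2 + c^2 := by linear_combination (u^2 + c^2) * e2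
  have hsq : (DD a b c i j θ φ)^2 ≤ R^2 := by
    by_cases hi : i = 0
    · have hD : DD a b c i j θ φ = u * Real.cos Φ + c * Real.sin Φ := by
        unfold DD; rw [if_pos hi]
      rw [hD]
      nlinarith [sq_nonneg (u * Real.sin Φ - c * Real.cos Φ),
        sq_nonneg (a * Real.sin X - b * Real.cos X)]
    · have hD : DD a b c i j θ φ = u * Real.cos Φ := by
        unfold DD; rw [if_neg hi]; ring
      rw [hD]
      have hcos2 : Real.cos Φ ^ 2 ≤ 1 := by nlinarith [sq_nonneg (Real.sin Φ)]
      nlinarith [sq_nonneg (a * Real.sin X - b * Real.cos X), sq_nonneg u, sq_nonneg c,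
        sq_nonneg (u * Real.sin Φ)]
  have := Real.sqrt_le_sqrt hsq
  rwa [Real.sqrt_sq_eq_abs, Real.sqrt_sq hR] at this


/-- product of phase-derivative factors -/
noncomputable def mprod (a b c θ φ : ℝ) (L : List (ℕ × ℕ)) : ℂ :=
  (L.map (fun p => ((DD a b c p.1 p.2 θ φ : ℝ) : ℂ))).prod

/-- exponential kernel -/
noncomputable def KE (k a b c θ φ : ℝ) : ℂ :=
  Complex.exp (-Complex.I * (k:ℂ) * ((DD a b c 0 0 θ φ : ℝ) : ℂ))

/-- a single term -/
noncomputable def tm (k a b c θ φ : ℝ) (L : List (ℕ × ℕ)) : ℂ :=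
  (-Complex.I * (k:ℂ)) ^ L.length * mprod a b c θ φ L * KE k a b c θ φ

/-- the full kernel -/
noncomputable def km (k a b c θ φ : ℝ) (LL : List (List (ℕ × ℕ))) : ℂ :=
  (LL.map (tm k a b c θ φ)).sum

lemma bump1_length : ∀ L : List (ℕ × ℕ), ∀ L' ∈ bump1 L, L'.length = L.length := by
  intro L
  induction L with
  | nil => intro L' h; simp [bump1] at h
  | cons p L IH =>
      intro L' h
      simp only [bump1, List.mem_cons, List.mem_map] at h
      rcases h with rfl | ⟨L'', hL'', rfl⟩
      · simp
      · simp [IH L'' hL'']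

lemma bump2_length : ∀ L : List (ℕ × ℕ), ∀ L' ∈ bump2 L, L'.length = L.length := by
  intro L
  induction L with
  | nil => intro L' h; simp [bump2] at h
  | cons p L IH =>
      intro L' h
      simp only [bump2, List.mem_cons, List.mem_map] at h
      rcases h with rfl | ⟨L'', hL'', rfl⟩
      · simp
      · simp [IH L'' hL'']

lemma mprod_cons (a b c θ φ : ℝ) (p : ℕ × ℕ) (L : List (ℕ × ℕ)) :
    mprod a b c θ φ (p :: L)
      = ((DD a b c p.1 p.2 θ φ : ℝ) : ℂ) * mprod a b c θ φ L := by
  simp [mprod]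

lemma mprod_hasDerivAt_theta (k a b c θ φ : ℝ) : ∀ L : List (ℕ × ℕ),
    HasDerivAt (fun t => mprod a b c t φ L)
      (((bump1 L).map (mprod a b c θ φ)).sum) θ := by
  intro L
  induction L with
  | nil =>
      have : (fun t => mprod a b c t φ []) = fun _ => (1:ℂ) := by
        funext t; simp [mprod]
      rw [this]
      simpa [bump1] using hasDerivAt_const θ (1:ℂ)
  | cons p L IH =>
      have hD : HasDerivAt (fun t => ((DD a b c p.1 p.2 t φ : ℝ) : ℂ))
          ((DD a b c (p.1+1) p.2 θ φ : ℝ) : ℂ) θ :=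
        (DD_hasDerivAt_theta a b c p.1 p.2 θ φ).ofReal_comp
      have hfun : (fun t => mprod a b c t φ (p :: L))
          = fun t => ((DD a b c p.1 p.2 t φ : ℝ) : ℂ) * mprod a b c t φ L := by
        funext t; exact mprod_cons a b c t φ p L
      rw [hfun]
      have h1 := hD.mul IH
      convert h1 using 1
      · rfl
      · rfl
      simp only [bump1, List.map_cons, List.sum_cons, List.map_map]
      rw [mprod_cons]
      have hcomp : (mprod a b c θ φ ∘ (p :: ·))
          = fun L' => ((DD a b c p.1 p.2 θ φ : ℝ) : ℂ) * mprod a b c θ φ L' := by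
        funext L'; exact mprod_cons a b c θ φ p L'
      rw [hcomp, List.sum_map_mul_left]

lemma mprod_hasDerivAt_phi (k a b c θ φ : ℝ) : ∀ L : List (ℕ × ℕ),
    HasDerivAt (fun t => mprod a b c θ t L)
      (((bump2 L).map (mprod a b c θ φ)).sum) φ := by
  intro L
  induction L with
  | nil =>
      have : (fun t => mprod a b c θ t []) = fun _ => (1:ℂ) := by
        funext t; simp [mprod]
      rw [this]
      simpa [bump2] using hasDerivAt_const φ (1:ℂ)
  | cons p L IH =>
      have hD : HasDerivAt (fun t => ((DD a b c p.1 p.2 θ t : ℝ) : ℂ))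
          ((DD a b c p.1 (p.2+1) θ φ : ℝ) : ℂ) φ :=
        (DD_hasDerivAt_phi a b c p.1 p.2 θ φ).ofReal_comp
      have hfun : (fun t => mprod a b c θ t (p :: L))
          = fun t => ((DD a b c p.1 p.2 θ t : ℝ) : ℂ) * mprod a b c θ t L := by
        funext t; exact mprod_cons a b c θ t p L
      rw [hfun]
      have h1 := hD.mul IH
      convert h1 using 1
      · rfl
      · rfl
      simp only [bump2, List.map_cons, List.sum_cons, List.map_map]
      rw [mprod_cons]
      have hcomp : (mprod a b c θ φ ∘ (p :: ·))
          = fun L' => ((DD a b c p.1 p.2 θ φ : ℝ) : ℂ) * mprod a b c θ φ L' := by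
        funext L'; exact mprod_cons a b c θ φ p L'
      rw [hcomp, List.sum_map_mul_left]

lemma KE_hasDerivAt_theta (k a b c θ φ : ℝ) :
    HasDerivAt (fun t => KE k a b c t φ)
      (-Complex.I * (k:ℂ) * ((DD a b c 1 0 θ φ : ℝ) : ℂ) * KE k a b c θ φ) θ := by
  have hD : HasDerivAt (fun t => ((DD a b c 0 0 t φ : ℝ) : ℂ))
      ((DD a b c 1 0 θ φ : ℝ) : ℂ) θ :=
    (DD_hasDerivAt_theta a b c 0 0 θ φ).ofReal_comp
  have h1 := (hD.const_mul (-Complex.I * (k:ℂ))).cexp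
  convert h1 using 1
  · rfl
  unfold KE
  ring

lemma KE_hasDerivAt_phi (k a b c θ φ : ℝ) :
    HasDerivAt (fun t => KE k a b c θ t)
      (-Complex.I * (k:ℂ) * ((DD a b c 0 1 θ φ : ℝ) : ℂ) * KE k a b c θ φ) φ := by
  have hD : HasDerivAt (fun t => ((DD a b c 0 0 θ t : ℝ) : ℂ))
      ((DD a b c 0 1 θ φ : ℝ) : ℂ) φ :=
    (DD_hasDerivAt_phi a b c 0 0 θ φ).ofReal_comp
  have h1 := (hD.const_mul (-Complex.I * (k:ℂ))).cexp
  convert h1 using 1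
  · rfl
  unfold KE
  ring

lemma sum_tm_of_len (k a b c θ φ : ℝ) (n : ℕ) :
    ∀ l : List (List (ℕ × ℕ)), (∀ L' ∈ l, L'.length = n) →
      (l.map (tm k a b c θ φ)).sum
        = (-Complex.I * (k:ℂ)) ^ n * ((l.map (mprod a b c θ φ)).sum) * KE k a b c θ φ := by
  intro l
  induction l with
  | nil => simp
  | cons L' l IH =>
      intro h
      have hL' : L'.length = n := h L' List.mem_cons_self
      have hrest := IH (fun L'' hL'' => h L'' (List.mem_cons_of_mem L' hL''))
      simp only [List.map_cons, List.sum_cons, hrest]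
      unfold tm
      rw [hL']
      ring

lemma tm_hasDerivAt_theta (k a b c θ φ : ℝ) (L : List (ℕ × ℕ)) :
    HasDerivAt (fun t => tm k a b c t φ L)
      (((step1 L).map (tm k a b c θ φ)).sum) θ := by
  have hfun : (fun t => tm k a b c t φ L)
      = fun t => (-Complex.I * (k:ℂ)) ^ L.length * (mprod a b c t φ L * KE k a b c t φ) := by
    funext t; unfold tm; ring
  rw [hfun]
  have h1 := ((mprod_hasDerivAt_theta k a b c θ φ L).mul
    (KE_hasDerivAt_theta k a b c θ φ)).const_mul ((-Complex.I * (k:ℂ)) ^ L.length)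
  convert h1 using 1
  · rfl
  · rfl
  simp only [step1, List.map_cons, List.sum_cons]
  rw [sum_tm_of_len k a b c θ φ L.length (bump1 L) (bump1_length L)]
  unfold tm
  simp only [List.length_cons, mprod_cons]
  rw [pow_succ]
  ring

lemma tm_hasDerivAt_phi (k a b c θ φ : ℝ) (L : List (ℕ × ℕ)) :
    HasDerivAt (fun t => tm k a b c θ t L)
      (((step2 L).map (tm k a b c θ φ)).sum) φ := by
  have hfun : (fun t => tm k a b c θ t L)
      = fun t => (-Complex.I * (k:ℂ)) ^ L.length * (mprod a b c θ t L * KE k a b c θ t) := by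
    funext t; unfold tm; ring
  rw [hfun]
  have h1 := ((mprod_hasDerivAt_phi k a b c θ φ L).mul
    (KE_hasDerivAt_phi k a b c θ φ)).const_mul ((-Complex.I * (k:ℂ)) ^ L.length)
  convert h1 using 1
  · rfl
  · rfl
  simp only [step2, List.map_cons, List.sum_cons]
  rw [sum_tm_of_len k a b c θ φ L.length (bump2 L) (bump2_length L)]
  unfold tm
  simp only [List.length_cons, mprod_cons]
  rw [pow_succ]
  ring

lemma km_hasDerivAt_theta (k a b c θ φ : ℝ) : ∀ LL : List (List (ℕ × ℕ)),
    HasDerivAt (fun t => km k a b c t φ LL) (km k a b c θ φ (SS step1 LL)) θ := by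
  intro LL
  induction LL with
  | nil =>
      have : (fun t => km k a b c t φ []) = fun _ => (0:ℂ) := by
        funext t; simp [km]
      rw [this]
      simpa [km, SS] using hasDerivAt_const θ (0:ℂ)
  | cons L LS IH =>
      have hfun : (fun t => km k a b c t φ (L :: LS))
          = fun t => tm k a b c t φ L + km k a b c t φ LS := by
        funext t; simp [km]
      rw [hfun]
      have h1 := (tm_hasDerivAt_theta k a b c θ φ L).add IH
      convert h1 using 1
      · rfl
      · rfl
      unfold km
      rw [show SS step1 (L :: LS) = step1 L ++ SS step1 LS from rfl]
      rw [List.map_append, List.sum_append]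

lemma km_hasDerivAt_phi (k a b c θ φ : ℝ) : ∀ LL : List (List (ℕ × ℕ)),
    HasDerivAt (fun t => km k a b c θ t LL) (km k a b c θ φ (SS step2 LL)) φ := by
  intro LL
  induction LL with
  | nil =>
      have : (fun t => km k a b c θ t []) = fun _ => (0:ℂ) := by
        funext t; simp [km]
      rw [this]
      simpa [km, SS] using hasDerivAt_const φ (0:ℂ)
  | cons L LS IH =>
      have hfun : (fun t => km k a b c θ t (L :: LS))
          = fun t => tm k a b c θ t L + km k a b c θ t LS := by
        funext t; simp [km]
      rw [hfun]
      have h1 := (tm_hasDerivAt_phi k a b c θ φ L).add IH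
      convert h1 using 1
      · rfl
      · rfl
      unfold km
      rw [show SS step2 (L :: LS) = step2 L ++ SS step2 LS from rfl]
      rw [List.map_append, List.sum_append]

lemma norm_KE (k a b c θ φ : ℝ) : ‖KE k a b c θ φ‖ = 1 := by
  unfold KE
  rw [Complex.norm_exp]
  have : (-Complex.I * (k:ℂ) * ((DD a b c 0 0 θ φ : ℝ) : ℂ)).re = 0 := by
    simp [Complex.mul_re, Complex.mul_im]
  rw [this, Real.exp_zero]

lemma norm_mprod_le {a b c R : ℝ} (hR : 0 ≤ R) (h : a^2 + b^2 + c^2 ≤ R^2) (θ φ : ℝ) :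
    ∀ L : List (ℕ × ℕ), ‖mprod a b c θ φ L‖ ≤ R ^ L.length := by
  intro L
  induction L with
  | nil => simp [mprod]
  | cons p L IH =>
      rw [mprod_cons, norm_mul]
      have h1 : ‖((DD a b c p.1 p.2 θ φ : ℝ) : ℂ)‖ ≤ R := by
        rw [Complex.norm_real]
        exact DD_abs_le hR h p.1 p.2 θ φ
      calc ‖((DD a b c p.1 p.2 θ φ : ℝ) : ℂ)‖ * ‖mprod a b c θ φ L‖
          ≤ R * R ^ L.length := by
            apply mul_le_mul h1 IH (norm_nonneg _) hR
        _ = R ^ (p :: L).length := by rw [List.length_cons, pow_succ]; ring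

lemma norm_tm_le {k a b c R : ℝ} (hk : 0 ≤ k) (hR : 0 ≤ R)
    (h : a^2 + b^2 + c^2 ≤ R^2) (θ φ : ℝ) (L : List (ℕ × ℕ)) :
    ‖tm k a b c θ φ L‖ ≤ (k * R) ^ L.length := by
  unfold tm
  rw [norm_mul, norm_mul, norm_KE, mul_one, norm_pow]
  have h1 : ‖-Complex.I * (k:ℂ)‖ = k := by
    rw [norm_mul, norm_neg, Complex.norm_I, one_mul, Complex.norm_real]
    exact abs_of_nonneg hk
  rw [h1, mul_pow]
  apply mul_le_mul_of_nonneg_left (norm_mprod_le hR h θ φ L) (by positivity)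

lemma norm_km_le {k a b c R : ℝ} (hk : 0 ≤ k) (hR : 0 ≤ R)
    (h : a^2 + b^2 + c^2 ≤ R^2) (θ φ : ℝ) :
    ∀ LL : List (List (ℕ × ℕ)), ‖km k a b c θ φ LL‖ ≤ Wt (k * R) LL := by
  intro LL
  induction LL with
  | nil => simp [km, Wt]
  | cons L LS IH =>
      have hsplit : km k a b c θ φ (L :: LS) = tm k a b c θ φ L + km k a b c θ φ LS := by
        simp [km]
      have hW : Wt (k*R) (L :: LS) = (k*R) ^ L.length + Wt (k*R) LS := by
        simp [Wt]
      rw [hsplit, hW]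
      calc ‖tm k a b c θ φ L + km k a b c θ φ LS‖
          ≤ ‖tm k a b c θ φ L‖ + ‖km k a b c θ φ LS‖ := norm_add_le _ _
        _ ≤ (k*R) ^ L.length + Wt (k*R) LS := by
            exact add_le_add (norm_tm_le hk hR h θ φ L) IH


abbrev E3 := EuclideanSpace ℝ (Fin 3)

lemma cont_DD (i j : ℕ) (θ φ : ℝ) :
    Continuous (fun y : E3 => DD (y 0) (y 1) (y 2) i j θ φ) := by
  unfold DD
  apply Continuous.add
  · have h0 : Continuous (fun y : E3 => y 0) := (EuclideanSpace.proj (0 : Fin 3)).continuous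
    have h1 : Continuous (fun y : E3 => y 1) := (EuclideanSpace.proj (1 : Fin 3)).continuous
    fun_prop
  · split_ifs
    · have h2 : Continuous (fun y : E3 => y 2) := (EuclideanSpace.proj (2 : Fin 3)).continuous
      fun_prop
    · exact continuous_const

lemma cont_mprod (θ φ : ℝ) (L : List (ℕ × ℕ)) :
    Continuous (fun y : E3 => mprod (y 0) (y 1) (y 2) θ φ L) := by
  induction L with
  | nil =>
      have : (fun y : E3 => mprod (y 0) (y 1) (y 2) θ φ []) = fun _ => (1:ℂ) := by
        funext y; simp [mprod]
      rw [this]; exact continuous_const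
  | cons p L IH =>
      have : (fun y : E3 => mprod (y 0) (y 1) (y 2) θ φ (p :: L))
          = fun y => ((DD (y 0) (y 1) (y 2) p.1 p.2 θ φ : ℝ) : ℂ)
              * mprod (y 0) (y 1) (y 2) θ φ L := by
        funext y; simp [mprod]
      rw [this]
      exact (Complex.continuous_ofReal.comp (cont_DD p.1 p.2 θ φ)).mul IH

lemma cont_km (k θ φ : ℝ) (LL : List (List (ℕ × ℕ))) :
    Continuous (fun y : E3 => km k (y 0) (y 1) (y 2) θ φ LL) := by
  induction LL with
  | nil =>
      have : (fun y : E3 => km k (y 0) (y 1) (y 2) θ φ []) = fun _ => (0:ℂ) := by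
        funext y; simp [km]
      rw [this]; exact continuous_const
  | cons L LS IH =>
      have : (fun y : E3 => km k (y 0) (y 1) (y 2) θ φ (L :: LS))
          = fun y => tm k (y 0) (y 1) (y 2) θ φ L + km k (y 0) (y 1) (y 2) θ φ LS := by
        funext y; simp [km]
      rw [this]
      apply Continuous.add _ IH
      unfold tm
      apply Continuous.mul
      · apply Continuous.mul continuous_const (cont_mprod θ φ L)
      · unfold KE
        apply Complex.continuous_exp.comp
        apply Continuous.mul continuous_const
        exact Complex.continuous_ofReal.comp (cont_DD 0 0 θ φ)

section main
variable {R k : ℝ} {f : E3 → ℂ}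

lemma coord_sq_le {y : E3} (h : ‖y‖ ≤ R) :
    (y 0)^2 + (y 1)^2 + (y 2)^2 ≤ R^2 := by
  have h0 : 0 ≤ ‖y‖ := norm_nonneg y
  have h2 : ‖y‖^2 ≤ R^2 := by nlinarith
  rw [EuclideanSpace.norm_eq] at h2
  rw [Real.sq_sqrt (by positivity)] at h2
  simpa [Fin.sum_univ_three, sq_abs] using h2

lemma km_f_bound (hk : 0 ≤ k) (hR : 0 ≤ R)
    (hsupp : ∀ x : E3, x ∉ Metric.ball (0 : E3) R → f x = 0)
    (LL : List (List (ℕ × ℕ))) (θ φ : ℝ) (y : E3) :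
    ‖km k (y 0) (y 1) (y 2) θ φ LL * f y‖ ≤ Wt (k * R) LL * ‖f y‖ := by
  by_cases hfy : f y = 0
  · simp [hfy]
  · have hy : y ∈ Metric.ball (0 : E3) R := by
      by_contra hc
      exact hfy (hsupp y hc)
    have hnorm : ‖y‖ ≤ R := by
      have := mem_ball_zero_iff.1 hy
      linarith
    rw [norm_mul]
    apply mul_le_mul_of_nonneg_right _ (norm_nonneg _)
    exact norm_km_le hk hR (coord_sq_le hnorm) θ φ LL

lemma km_f_integrable (hk : 0 ≤ k) (hR : 0 ≤ R) (hf : Integrable f volume)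
    (hsupp : ∀ x : E3, x ∉ Metric.ball (0 : E3) R → f x = 0)
    (LL : List (List (ℕ × ℕ))) (θ φ : ℝ) :
    Integrable (fun y => km k (y 0) (y 1) (y 2) θ φ LL * f y) volume := by
  apply Integrable.mono' (hf.norm.const_mul (Wt (k*R) LL))
  · exact ((cont_km k θ φ LL).aestronglyMeasurable).mul hf.aestronglyMeasurable
  · exact ae_of_all _ (km_f_bound hk hR hsupp LL θ φ)

lemma step_theta (hk : 0 ≤ k) (hR : 0 ≤ R) (hf : Integrable f volume)
    (hsupp : ∀ x : E3, x ∉ Metric.ball (0 : E3) R → f x = 0)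
    (LL : List (List (ℕ × ℕ))) (θ φ : ℝ) :
    HasDerivAt (fun t => ∫ y : E3, km k (y 0) (y 1) (y 2) t φ LL * f y)
      (∫ y : E3, km k (y 0) (y 1) (y 2) θ φ (SS step1 LL) * f y) θ := by
  have := hasDerivAt_integral_of_dominated_loc_of_deriv_le (μ := volume)
    (F := fun t (y : E3) => km k (y 0) (y 1) (y 2) t φ LL * f y)
    (F' := fun t (y : E3) => km k (y 0) (y 1) (y 2) t φ (SS step1 LL) * f y)
    (x₀ := θ) (s := Metric.ball θ 1) (bound := fun y => Wt (k*R) (SS step1 LL) * ‖f y‖)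
    (Metric.ball_mem_nhds θ one_pos)
    (Filter.Eventually.of_forall (fun t =>
      ((cont_km k t φ LL).aestronglyMeasurable).mul hf.aestronglyMeasurable))
    (km_f_integrable hk hR hf hsupp LL θ φ)
    (((cont_km k θ φ (SS step1 LL)).aestronglyMeasurable).mul hf.aestronglyMeasurable)
    (ae_of_all _ (fun y t _ => km_f_bound hk hR hsupp (SS step1 LL) t φ y))
    (hf.norm.const_mul _)
    (ae_of_all _ (fun y t _ =>
      (km_hasDerivAt_theta k (y 0) (y 1) (y 2) t φ LL).mul_const (f y)))
  exact this.2

lemma step_phi (hk : 0 ≤ k) (hR : 0 ≤ R) (hf : Integrable f volume)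
    (hsupp : ∀ x : E3, x ∉ Metric.ball (0 : E3) R → f x = 0)
    (LL : List (List (ℕ × ℕ))) (θ φ : ℝ) :
    HasDerivAt (fun t => ∫ y : E3, km k (y 0) (y 1) (y 2) θ t LL * f y)
      (∫ y : E3, km k (y 0) (y 1) (y 2) θ φ (SS step2 LL) * f y) φ := by
  have := hasDerivAt_integral_of_dominated_loc_of_deriv_le (μ := volume)
    (F := fun t (y : E3) => km k (y 0) (y 1) (y 2) θ t LL * f y)
    (F' := fun t (y : E3) => km k (y 0) (y 1) (y 2) θ t (SS step2 LL) * f y)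
    (x₀ := φ) (s := Metric.ball φ 1) (bound := fun y => Wt (k*R) (SS step2 LL) * ‖f y‖)
    (Metric.ball_mem_nhds φ one_pos)
    (Filter.Eventually.of_forall (fun t =>
      ((cont_km k θ t LL).aestronglyMeasurable).mul hf.aestronglyMeasurable))
    (km_f_integrable hk hR hf hsupp LL θ φ)
    (((cont_km k θ φ (SS step2 LL)).aestronglyMeasurable).mul hf.aestronglyMeasurable)
    (ae_of_all _ (fun y t _ => km_f_bound hk hR hsupp (SS step2 LL) θ t y))
    (hf.norm.const_mul _)
    (ae_of_all _ (fun y t _ =>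
      (km_hasDerivAt_phi k (y 0) (y 1) (y 2) θ t LL).mul_const (f y)))
  exact this.2

end main


section main2
variable {R k : ℝ} {f : E3 → ℂ}

lemma km_init (k θ φ : ℝ) (y : E3) :
    km k (y 0) (y 1) (y 2) θ φ [[]]
      = Complex.exp (-Complex.I * (k : ℂ) *
          (((Real.cos θ * Real.cos φ) : ℝ) * (y 0 : ℂ) +
            ((Real.sin θ * Real.cos φ) : ℝ) * (y 1 : ℂ) +
            ((Real.sin φ : ℝ) : ℂ) * (y 2 : ℂ))) := by
  simp only [km, tm, mprod, KE, List.map_cons, List.map_nil, List.sum_cons, List.sum_nil,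
    List.prod_nil, List.length_nil, pow_zero, one_mul, add_zero, mul_one]
  congr 1
  unfold DD
  push_cast
  simp only [Nat.cast_zero, zero_mul, add_zero, if_pos rfl]
  push_cast
  ring

lemma iter_theta (hk : 0 ≤ k) (hR : 0 ≤ R) (hf : Integrable f volume)
    (hsupp : ∀ x : E3, x ∉ Metric.ball (0 : E3) R → f x = 0) (m : ℕ)
    (LL : List (List (ℕ × ℕ))) :
    pdTheta^[m] (fun θ φ => ∫ y : E3, km k (y 0) (y 1) (y 2) θ φ LL * f y)
      = fun θ φ => ∫ y : E3, km k (y 0) (y 1) (y 2) θ φ ((SS step1)^[m] LL) * f y := by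
  induction m with
  | zero => rfl
  | succ m IH =>
      rw [Function.iterate_succ_apply', IH, Function.iterate_succ_apply']
      funext θ φ
      show deriv (fun t => ∫ y : E3, km k (y 0) (y 1) (y 2) t φ ((SS step1)^[m] LL) * f y) θ = _
      exact (step_theta hk hR hf hsupp ((SS step1)^[m] LL) θ φ).deriv

lemma iter_phi (hk : 0 ≤ k) (hR : 0 ≤ R) (hf : Integrable f volume)
    (hsupp : ∀ x : E3, x ∉ Metric.ball (0 : E3) R → f x = 0) (n : ℕ)
    (LL : List (List (ℕ × ℕ))) :
    pdPhi^[n] (fun θ φ => ∫ y : E3, km k (y 0) (y 1) (y 2) θ φ LL * f y)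
      = fun θ φ => ∫ y : E3, km k (y 0) (y 1) (y 2) θ φ ((SS step2)^[n] LL) * f y := by
  induction n with
  | zero => rfl
  | succ n IH =>
      rw [Function.iterate_succ_apply', IH, Function.iterate_succ_apply']
      funext θ φ
      show deriv (fun t => ∫ y : E3, km k (y 0) (y 1) (y 2) θ t ((SS step2)^[n] LL) * f y) φ = _
      exact (step_phi hk hR hf hsupp ((SS step2)^[n] LL) θ φ).deriv

lemma good_iter1 (m : ℕ) {N : ℕ} {LL : List (List (ℕ × ℕ))} (h : Good N LL) :
    Good (N + m) ((SS step1)^[m] LL) := by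
  induction m with
  | zero => simpa using h
  | succ m IH =>
      rw [Function.iterate_succ_apply']
      exact good_step stepLen_step1 IH

lemma good_iter2 (n : ℕ) {N : ℕ} {LL : List (List (ℕ × ℕ))} (h : Good N LL) :
    Good (N + n) ((SS step2)^[n] LL) := by
  induction n with
  | zero => simpa using h
  | succ n IH =>
      rw [Function.iterate_succ_apply']
      exact good_step stepLen_step2 IH


end main2
end ADB

open ADB in
/-- Derivative bounds for the far-field pattern in spherical angular coordinates:
`|∂^β H(θ,φ)| ≤ M₂ (2R)^{|β|} β!` with `M₂ = max{(2k)^{n₀}/n₀!, 1}·‖f‖_{L¹}`. -/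
theorem angular_derivative_bounds (R k : ℝ) (hR : 1 ≤ R) (hk : 0 < k)
    (f : EuclideanSpace ℝ (Fin 3) → ℂ)
    (hf : Integrable f (volume : Measure (EuclideanSpace ℝ (Fin 3))))
    (hsupp : ∀ x, x ∉ Metric.ball (0 : EuclideanSpace ℝ (Fin 3)) R → f x = 0)
    (n₀ : ℕ) (hn₀ : ∀ n : ℕ, (2 * k) ^ n / n.factorial ≤ (2 * k) ^ n₀ / n₀.factorial)
    (H : ℝ → ℝ → ℂ)
    (hH : ∀ θ φ : ℝ, H θ φ = ∫ y : EuclideanSpace ℝ (Fin 3),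
        Complex.exp (-Complex.I * (k : ℂ) *
          (((Real.cos θ * Real.cos φ) : ℝ) * (y 0 : ℂ) +
            ((Real.sin θ * Real.cos φ) : ℝ) * (y 1 : ℂ) +
            ((Real.sin φ : ℝ) : ℂ) * (y 2 : ℂ))) * f y) :
    ∀ β : ℕ × ℕ, ∀ θ φ : ℝ,
      ‖(pdTheta^[β.1] (pdPhi^[β.2] H)) θ φ‖ ≤
        (max ((2 * k) ^ n₀ / n₀.factorial) 1 *
            ∫ x : EuclideanSpace ℝ (Fin 3), ‖f x‖) *
          (2 * R) ^ (β.1 + β.2) * (β.1.factorial * β.2.factorial) := by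
  rintro ⟨m, n⟩ θ φ
  simp only
  set Mv : ℝ := max ((2 * k) ^ n₀ / n₀.factorial) 1 with hMv
  have hk0 : (0:ℝ) ≤ k := le_of_lt hk
  have hR0 : (0:ℝ) ≤ R := by linarith
  have hM : ∀ j : ℕ, (2*k) ^ j ≤ Mv * j.factorial := by
    intro j
    have h1 : (2*k) ^ j / j.factorial ≤ Mv := le_trans (hn₀ j) (le_max_left _ _)
    have h2 : (0:ℝ) < j.factorial := by positivity
    calc (2*k) ^ j = ((2*k) ^ j / j.factorial) * j.factorial := by field_simp
      _ ≤ Mv * j.factorial := by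
          apply mul_le_mul_of_nonneg_right h1 (le_of_lt h2)
  -- the function H agrees with the km-integral representation
  have hH' : H = fun θ φ => ∫ y : E3, km k (y 0) (y 1) (y 2) θ φ [[]] * f y := by
    funext θ' φ'
    rw [hH θ' φ']
    congr 1
    funext y
    rw [km_init]
  have hrep : (pdTheta^[m] (pdPhi^[n] H))
      = fun θ φ => ∫ y : E3,
          km k (y 0) (y 1) (y 2) θ φ ((SS step1)^[m] ((SS step2)^[n] [[]])) * f y := by
    rw [hH', iter_phi hk0 hR0 hf hsupp n [[]], iter_theta hk0 hR0 hf hsupp m _]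
  rw [hrep]
  set LL := (SS step1)^[m] ((SS step2)^[n] [[]]) with hLL
  have hgood : Good (m+n) LL := by
    have h1 : Good n ((SS step2)^[n] [[]]) := by
      have := good_iter2 n good_init
      simpa using this
    have h2 := good_iter1 m h1
    have : n + m = m + n := Nat.add_comm n m
    rwa [this] at h2
  have hWt : Wt (k*R) LL ≤ Mv * (2*R) ^ (m+n) * (m.factorial * n.factorial) :=
    Wt_le_final hgood hk0 hR hM
  have hWt0 : 0 ≤ Wt (k*R) LL := Wt_nonneg (by positivity) LL
  have hint0 : (0:ℝ) ≤ ∫ x : E3, ‖f x‖ := integral_nonneg (fun x => norm_nonneg _)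
  calc ‖∫ y : E3, km k (y 0) (y 1) (y 2) θ φ LL * f y‖
      ≤ ∫ y : E3, ‖km k (y 0) (y 1) (y 2) θ φ LL * f y‖ := norm_integral_le_integral_norm _
    _ ≤ ∫ y : E3, Wt (k*R) LL * ‖f y‖ := by
        apply integral_mono_of_nonneg (ae_of_all _ (fun y => norm_nonneg _))
          (hf.norm.const_mul _)
        exact ae_of_all _ (fun y => km_f_bound hk0 hR0 hsupp LL θ φ y)
    _ = Wt (k*R) LL * ∫ y : E3, ‖f y‖ := integral_const_mul _ _
    _ ≤ (Mv * (2*R) ^ (m+n) * (m.factorial * n.factorial)) * ∫ y : E3, ‖f y‖ :=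
        mul_le_mul_of_nonneg_right hWt hint0
    _ = (Mv * ∫ x : E3, ‖f x‖) * (2*R) ^ (m+n) * (m.factorial * n.factorial) := by ring
end

section
/- Let f ∈ L²(ℝ³) be supported in B(0,R), and suppose the far-field pattern u^∞(x̂,k) = ∫ e^{-i k x̂·y} f(y) dy vanishes for all x̂ in some nonempty open subset V of the unit sphere S² and for all k ∈ (0,K) with K > 1. Then f = 0 almost everywhere in ℝ³. -/
open MeasureTheory Real

open Complex FourierTransform VectorFourier Filter
open scoped RealInnerProductSpace ContDiff

local notation "E3" => EuclideanSpace ℝ (Fin 3)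

set_option maxHeartbeats 1000000 in
lemma aux_analytic {R : ℝ} (hR : 0 ≤ R) (f : E3 → ℂ) (hfi : Integrable f volume)
    (hsupp : ∀ y : E3, R ≤ ‖y‖ → f y = 0) :
    AnalyticOnNhd ℝ (𝓕 f) Set.univ := by
  intro w₀ _
  set μ : Measure E3 := volume with hμ
  set M : ℝ := ∫ y, ‖f y‖ ∂μ with hM
  have hM0 : 0 ≤ M := integral_nonneg fun y => norm_nonneg _
  set g : E3 → ℂ := fun y => 𝐞 (-⟪y, w₀⟫) • f y with hg_def
  have hg : Integrable g μ := (Real.fourierIntegral_convergent_iff w₀).2 hfi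
  have hgnorm : ∀ y, ‖g y‖ = ‖f y‖ := fun y => Circle.norm_smul _ _
  have hgsupp : ∀ y : E3, R ≤ ‖y‖ → g y = 0 := fun y hy => by
    rw [hg_def]; simp [hsupp y hy]
  have hgM : ∫ y, ‖g y‖ ∂μ = M := by simp_rw [hgnorm]; rfl
  set L : E3 →L[ℝ] E3 →L[ℝ] ℝ := innerSL ℝ with hL
  have hLnorm : ‖L‖ ≤ 1 := norm_innerSL_le _
  have hip : ∀ v w : E3, L v w = ⟪v, w⟫ := fun v w => rfl
  have hptbd : ∀ n : ℕ, ∀ y : E3, ‖y‖ ^ n * ‖g y‖ ≤ R ^ n * ‖g y‖ := by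
    intro n y
    rcases le_or_gt R ‖y‖ with h | h
    · simp [hgsupp y h]
    · exact mul_le_mul_of_nonneg_right (pow_le_pow_left₀ (norm_nonneg y) h.le n) (norm_nonneg _)
  have moment : ∀ n : ℕ, Integrable (fun y => ‖y‖ ^ n * ‖g y‖) μ := by
    intro n
    refine (hg.norm.const_mul (R ^ n)).mono'
      (((continuous_norm.pow n).aestronglyMeasurable).mul hg.norm.aestronglyMeasurable) ?_
    filter_upwards with y
    rw [Real.norm_of_nonneg (by positivity)]
    exact hptbd n y
  have momentI : ∀ n : ℕ, ∫ y, ‖y‖ ^ n * ‖g y‖ ∂μ ≤ R ^ n * M := by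
    intro n
    calc ∫ y, ‖y‖ ^ n * ‖g y‖ ∂μ ≤ ∫ y, R ^ n * ‖g y‖ ∂μ :=
          integral_mono (moment n) (hg.norm.const_mul _) (hptbd n)
      _ = R ^ n * ∫ y, ‖g y‖ ∂μ := integral_const_mul _ _
      _ = R ^ n * M := by rw [hgM]
  have hΦint : ∀ n : ℕ, Integrable (fun y => fourierPowSMulRight L g y n) μ := fun n =>
    VectorFourier.integrable_fourierPowSMulRight L (moment n) hg.1
  set p : FormalMultilinearSeries ℝ E3 ℂ :=
    fun n => ((n.factorial : ℝ))⁻¹ • ∫ y, fourierPowSMulRight L g y n ∂μ with hp_def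
  have hpnorm : ∀ n : ℕ, ‖p n‖ ≤ (2 * π * R) ^ n / n.factorial * M := by
    intro n
    have h1 : ‖∫ y, fourierPowSMulRight L g y n ∂μ‖ ≤ (2 * π) ^ n * (R ^ n * M) := by
      refine (norm_integral_le_integral_norm _).trans ?_
      calc ∫ y, ‖fourierPowSMulRight L g y n‖ ∂μ
          ≤ ∫ y, (2 * π) ^ n * (‖y‖ ^ n * ‖g y‖) ∂μ := by
            refine integral_mono (hΦint n).norm ((moment n).const_mul _) fun y => ?_
            refine (norm_fourierPowSMulRight_le L g y n).trans ?_
            have h2 : (2 * π * ‖L‖) ^ n ≤ (2 * π) ^ n := by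
              apply pow_le_pow_left₀ (by positivity)
              nlinarith [pi_pos, hLnorm, norm_nonneg L]
            calc (2 * π * ‖L‖) ^ n * ‖y‖ ^ n * ‖g y‖
                ≤ (2 * π) ^ n * ‖y‖ ^ n * ‖g y‖ := by
                  exact mul_le_mul_of_nonneg_right
                    (mul_le_mul_of_nonneg_right h2 (by positivity)) (norm_nonneg _)
              _ = (2 * π) ^ n * (‖y‖ ^ n * ‖g y‖) := by ring
        _ = (2 * π) ^ n * ∫ y, ‖y‖ ^ n * ‖g y‖ ∂μ := integral_const_mul _ _
        _ ≤ (2 * π) ^ n * (R ^ n * M) :=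
            mul_le_mul_of_nonneg_left (momentI n) (by positivity)
    calc ‖p n‖ = ((n.factorial : ℝ))⁻¹ * ‖∫ y, fourierPowSMulRight L g y n ∂μ‖ := by
          have hpn : p n = ((n.factorial : ℝ))⁻¹ • ∫ y, fourierPowSMulRight L g y n ∂μ := rfl
          rw [hpn, norm_smul ((n.factorial : ℝ))⁻¹ (∫ y, fourierPowSMulRight L g y n ∂μ),
            Real.norm_of_nonneg (by positivity)]
      _ ≤ ((n.factorial : ℝ))⁻¹ * ((2 * π) ^ n * (R ^ n * M)) :=
          mul_le_mul_of_nonneg_left h1 (by positivity)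
      _ = (2 * π * R) ^ n / n.factorial * M := by
          rw [mul_pow]; ring
  have hrad : p.radius = ⊤ := by
    apply FormalMultilinearSeries.radius_eq_top_of_summable_norm
    intro r
    have hs : Summable fun n : ℕ => (2 * π * R * r) ^ n / n.factorial * M :=
      (Real.summable_pow_div_factorial (2 * π * R * r)).mul_right M
    refine Summable.of_nonneg_of_le (fun n => by positivity) (fun n => ?_) hs
    calc ‖p n‖ * (r : ℝ) ^ n ≤ ((2 * π * R) ^ n / n.factorial * M) * (r : ℝ) ^ n :=
          mul_le_mul_of_nonneg_right (hpnorm n) (by positivity)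
      _ = (2 * π * R * r) ^ n / n.factorial * M := by rw [mul_pow, mul_pow]; ring
  have hball : HasFPowerSeriesOnBall (𝓕 f) p w₀ ⊤ := by
    refine ⟨by rw [hrad], by simp, ?_⟩
    intro h _
    set Fn : ℕ → E3 → ℂ :=
      fun n y => (n.factorial : ℂ)⁻¹ * (-(2 * π * Complex.I) * ((⟪y, h⟫ : ℝ) : ℂ)) ^ n * g y
      with hFn_def
    have hnorm : ∀ n : ℕ, ∀ y : E3,
        ‖Fn n y‖ = (n.factorial : ℝ)⁻¹ * (2 * π * |⟪y, h⟫|) ^ n * ‖g y‖ := by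
      intro n y
      rw [hFn_def]
      simp only [norm_mul, norm_pow, norm_inv, Complex.norm_natCast, norm_neg,
        Complex.norm_real, Real.norm_eq_abs, Complex.norm_I,
        Complex.norm_ofNat, mul_one]
      rw [_root_.abs_of_nonneg pi_nonneg]
    have hbd : ∀ n : ℕ, ∀ y : E3, ‖Fn n y‖ ≤ (2 * π * ‖h‖ * R) ^ n / n.factorial * ‖g y‖ := by
      intro n y
      rcases le_or_gt R ‖y‖ with hy | hy
      · simp [hFn_def, hgsupp y hy]
      · rw [hnorm n y]
        have hinner : |⟪y, h⟫| ≤ R * ‖h‖ :=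
          (abs_real_inner_le_norm y h).trans
            (mul_le_mul_of_nonneg_right hy.le (norm_nonneg _))
        have : (2 * π * |⟪y, h⟫|) ^ n ≤ (2 * π * ‖h‖ * R) ^ n := by
          apply pow_le_pow_left₀ (by positivity)
          nlinarith [pi_pos]
        calc (n.factorial : ℝ)⁻¹ * (2 * π * |⟪y, h⟫|) ^ n * ‖g y‖
            ≤ (n.factorial : ℝ)⁻¹ * (2 * π * ‖h‖ * R) ^ n * ‖g y‖ := by
              exact mul_le_mul_of_nonneg_right
                (mul_le_mul_of_nonneg_left this (by positivity)) (norm_nonneg _)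
          _ = (2 * π * ‖h‖ * R) ^ n / n.factorial * ‖g y‖ := by ring
    have hFnint : ∀ n : ℕ, Integrable (Fn n) μ := by
      intro n
      have hc : Continuous fun y : E3 =>
          (n.factorial : ℂ)⁻¹ * (-(2 * π * Complex.I) * ((⟪y, h⟫ : ℝ) : ℂ)) ^ n := by
        apply continuous_const.mul
        apply Continuous.pow
        exact continuous_const.mul
          (Complex.continuous_ofReal.comp (continuous_id.inner continuous_const))
      refine (hg.norm.const_mul ((2 * π * ‖h‖ * R) ^ n / n.factorial)).mono'
        ((hc.aestronglyMeasurable).mul hg.1) ?_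
      filter_upwards with y
      exact hbd n y
    have hFsum : Summable fun n : ℕ => ∫ y, ‖Fn n y‖ ∂μ := by
      have hs : Summable fun n : ℕ => (2 * π * ‖h‖ * R) ^ n / n.factorial * M :=
        (Real.summable_pow_div_factorial _).mul_right M
      refine Summable.of_nonneg_of_le
        (fun n => integral_nonneg fun y => norm_nonneg _) (fun n => ?_) hs
      calc ∫ y, ‖Fn n y‖ ∂μ
          ≤ ∫ y, (2 * π * ‖h‖ * R) ^ n / n.factorial * ‖g y‖ ∂μ :=
            integral_mono (hFnint n).norm
              (hg.norm.const_mul _) (hbd n)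
        _ = (2 * π * ‖h‖ * R) ^ n / n.factorial * ∫ y, ‖g y‖ ∂μ := integral_const_mul _ _
        _ = (2 * π * ‖h‖ * R) ^ n / n.factorial * M := by rw [hgM]
    have key : ∀ y : E3, HasSum (fun n => Fn n y) (𝐞 (-⟪y, h⟫) • g y) := by
      intro y
      have h1 : HasSum
          (fun n : ℕ => (-(2 * π * Complex.I) * ((⟪y, h⟫ : ℝ) : ℂ)) ^ n / n.factorial)
          (NormedSpace.exp (-(2 * π * Complex.I) * ((⟪y, h⟫ : ℝ) : ℂ))) :=
        NormedSpace.expSeries_div_hasSum_exp _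
      have h2 := h1.mul_right (g y)
      have h3 : (NormedSpace.exp (-(2 * π * Complex.I) * ((⟪y, h⟫ : ℝ) : ℂ))) * g y
          = 𝐞 (-⟪y, h⟫) • g y := by
        rw [← Complex.exp_eq_exp_ℂ, Circle.smul_def, Real.fourierChar_apply]
        congr 1
        congr 1
        push_cast
        ring
      rw [h3] at h2
      refine h2.congr_fun fun n => ?_
      rw [hFn_def]
      ring
    have main := MeasureTheory.hasSum_integral_of_summable_integral_norm
      (F := Fn) (μ := μ) hFnint hFsum
    have hFT : ∫ y, (∑' n, Fn n y) ∂μ = 𝓕 f (w₀ + h) := by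
      rw [Real.fourier_eq]
      apply integral_congr_ae
      filter_upwards with y
      rw [(key y).tsum_eq]
      rw [hg_def]
      simp only []
      rw [← mul_smul, ← AddChar.map_add_eq_mul]
      congr 1
      rw [inner_add_right]
      ring
    rw [hFT] at main
    refine main.congr_fun fun n => ?_
    rw [hp_def]
    simp only [ContinuousMultilinearMap.smul_apply]
    rw [ContinuousMultilinearMap.integral_apply (hΦint n), ← integral_smul]
    apply integral_congr_ae
    filter_upwards with y
    rw [fourierPowSMulRight_apply]
    simp only [hip, Finset.prod_const, Finset.card_univ, Fintype.card_fin,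
      hFn_def, Complex.real_smul, smul_eq_mul, Complex.ofReal_pow, Complex.ofReal_inv,
      Complex.ofReal_natCast, mul_pow]
    ring
  exact hball.analyticAt

-- Fourier inversion through Schwartz: if 𝓕 f = 0 then f = 0 a.e.
lemma aux_inj (f : E3 → ℂ) (hfi : Integrable f volume)
    (hzero : ∀ w : E3, 𝓕 f w = 0) : f =ᵐ[(volume : Measure E3)] 0 := by
  have main : ∀ᵐ x ∂(volume : Measure E3), f x = 0 := by
    apply ae_eq_zero_of_integral_contDiff_smul_eq_zero hfi.locallyIntegrable
    intro g hgsmooth hgsupp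
    -- the complexification of g is a Schwartz function
    have hGc : HasCompactSupport (fun x : E3 => (g x : ℂ)) :=
      hgsupp.comp_left Complex.ofReal_zero
    have hGsmooth : ContDiff ℝ ∞ (fun x : E3 => (g x : ℂ)) :=
      Complex.ofRealCLM.contDiff.comp hgsmooth
    set G : SchwartzMap E3 ℂ :=
      { toFun := fun x => (g x : ℂ)
        smooth' := hGsmooth
        decay' := by
          intro k n
          have h1 : HasCompactSupport (iteratedFDeriv ℝ n (fun x : E3 => (g x : ℂ))) :=
            hGc.iteratedFDeriv n
          have h2 : Continuous fun x : E3 =>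
              ‖x‖ ^ k * ‖iteratedFDeriv ℝ n (fun x : E3 => (g x : ℂ)) x‖ :=
            ((continuous_norm.pow k).mul
              (hGsmooth.continuous_iteratedFDeriv (by exact_mod_cast le_top)).norm)
          have h3 : HasCompactSupport fun x : E3 =>
              ‖x‖ ^ k * ‖iteratedFDeriv ℝ n (fun x : E3 => (g x : ℂ)) x‖ :=
            (h1.norm).mul_left
          obtain ⟨C, hC⟩ := h2.bounded_above_of_compact_support h3
          exact ⟨C, fun x => by simpa using hC x⟩ } with hG_def
    set φ : SchwartzMap E3 ℂ := (FourierTransform.fourierCLE ℝ (SchwartzMap E3 ℂ)).symm G with hφ_def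
    have hFφ : 𝓕 ⇑φ = fun x : E3 => (g x : ℂ) := by
      have h4 := (FourierTransform.fourierCLE ℝ (SchwartzMap E3 ℂ)).apply_symm_apply G
      have h5 : ⇑(FourierTransform.fourierCLE ℝ (SchwartzMap E3 ℂ) φ) = 𝓕 ⇑φ :=
        rfl
      rw [← h5, hφ_def, h4]
      rfl
    have hflip : (innerₗ E3).flip = innerₗ E3 := by
      apply LinearMap.ext; intro x; apply LinearMap.ext; intro y
      simp only [LinearMap.flip_apply, innerₗ_apply_apply]
      exact real_inner_comm x y
    have hswap := VectorFourier.integral_fourierIntegral_smul_eq_flip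
      (e := Real.fourierChar) (L := innerₗ E3) (μ := (volume : Measure E3))
      (ν := (volume : Measure E3)) Real.continuous_fourierChar
      continuous_inner φ.integrable hfi
    rw [hflip] at hswap
    calc ∫ x : E3, g x • f x
        = ∫ x : E3, (𝓕 ⇑φ x) • f x := by
          apply integral_congr_ae
          filter_upwards with x
          rw [hFφ]
          rw [Complex.real_smul, smul_eq_mul]
      _ = ∫ x : E3, φ x • (𝓕 f x) := hswap
      _ = 0 := by
          apply integral_eq_zero_of_ae
          filter_upwards with x
          rw [hzero x, smul_zero]
          rfl
  exact main

/-- Uniqueness from limited-aperture multi-frequency far-field data: if the far-field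
pattern of a compactly supported `L²` source vanishes on an open patch of directions
and for all wavenumbers in `(0,K)`, then the source vanishes. -/
theorem uniqueness_limited_aperture (R K : ℝ) (hR : 1 ≤ R) (hK : 1 < K)
    (f : EuclideanSpace ℝ (Fin 3) → ℂ)
    (hf : MemLp f 2 (volume : Measure (EuclideanSpace ℝ (Fin 3))))
    (hsupp : ∀ x, x ∉ Metric.ball (0 : EuclideanSpace ℝ (Fin 3)) R → f x = 0)
    (V : Set (EuclideanSpace ℝ (Fin 3)))
    (hVopen : ∃ U : Set (EuclideanSpace ℝ (Fin 3)), IsOpen U ∧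
      V = U ∩ Metric.sphere (0 : EuclideanSpace ℝ (Fin 3)) 1)
    (hVne : V.Nonempty)
    (hvanish : ∀ xhat ∈ V, ∀ k ∈ Set.Ioo (0 : ℝ) K,
      (∫ y : EuclideanSpace ℝ (Fin 3),
        Complex.exp (-Complex.I * (k : ℂ) * (∑ i, (xhat i : ℂ) * (y i : ℂ))) * f y) = 0) :
    f =ᵐ[(volume : Measure (EuclideanSpace ℝ (Fin 3)))] 0 := by
  obtain ⟨U, hUopen, hVU⟩ := hVopen
  obtain ⟨x₀, hx₀V⟩ := hVne
  have hπ := Real.pi_pos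
  have hK0 : (0 : ℝ) < K := lt_trans zero_lt_one hK
  have hR0 : (0 : ℝ) ≤ R := le_trans zero_le_one hR
  have hsupp' : ∀ y : E3, R ≤ ‖y‖ → f y = 0 := by
    intro y hy
    apply hsupp
    rw [Metric.mem_ball, dist_zero_right]
    exact not_lt.2 hy
  have hfi : Integrable f volume := by
    have hsub : Function.support f ⊆ Metric.ball (0 : E3) R := fun x hx => by
      by_contra h
      exact hx (hsupp x h)
    rw [← MeasureTheory.integrableOn_iff_integrable_of_support_subset hsub]
    have : IsFiniteMeasure (volume.restrict (Metric.ball (0 : E3) R)) := by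
      constructor
      rw [Measure.restrict_apply_univ]
      exact measure_ball_lt_top
    exact (hf.restrict _).integrable one_le_two
  have hana := aux_analytic hR0 f hfi hsupp'
  set c : ℝ := K / (2 * π) with hc_def
  have hc : 0 < c := div_pos hK0 (by positivity)
  set C : Set E3 := {w | 0 < ‖w‖ ∧ ‖w‖ < c ∧ (‖w‖⁻¹ • w) ∈ U} with hC_def
  have hCopen : IsOpen C := by
    rw [isOpen_iff_mem_nhds]
    rintro w ⟨hw1, hw2, hw3⟩
    have hwne : ‖w‖ ≠ 0 := ne_of_gt hw1
    have hcont : ContinuousAt (fun v : E3 => ‖v‖⁻¹ • v) w :=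
      ((continuous_norm.continuousAt).inv₀ hwne).smul continuousAt_id
    have m1 : {v : E3 | 0 < ‖v‖} ∈ nhds w :=
      (isOpen_lt continuous_const continuous_norm).mem_nhds hw1
    have m2 : {v : E3 | ‖v‖ < c} ∈ nhds w :=
      (isOpen_lt continuous_norm continuous_const).mem_nhds hw2
    have m3 : (fun v : E3 => ‖v‖⁻¹ • v) ⁻¹' U ∈ nhds w :=
      hcont.preimage_mem_nhds (hUopen.mem_nhds hw3)
    filter_upwards [m1, m2, m3] with v h1 h2 h3 using ⟨h1, h2, h3⟩
  have hvanC : ∀ w ∈ C, 𝓕 f w = 0 := by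
    rintro w ⟨hw1, hw2, hw3⟩
    have hwne : ‖w‖ ≠ 0 := ne_of_gt hw1
    set xh : E3 := ‖w‖⁻¹ • w with hxh_def
    have hxh1 : ‖xh‖ = 1 := by
      rw [hxh_def, norm_smul, Real.norm_eq_abs, _root_.abs_of_nonneg (inv_nonneg.2 (norm_nonneg w))]
      exact inv_mul_cancel₀ hwne
    have hxhV : xh ∈ V := by
      rw [hVU]
      exact ⟨hw3, by rwa [mem_sphere_zero_iff_norm]⟩
    have hk : 2 * π * ‖w‖ ∈ Set.Ioo (0 : ℝ) K := by
      constructor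
      · positivity
      · have := (lt_div_iff₀ (by positivity : (0:ℝ) < 2 * π)).1 hw2
        linarith
    have hv := hvanish xh hxhV (2 * π * ‖w‖) hk
    rw [Real.fourier_eq', ← hv]
    apply integral_congr_ae
    filter_upwards with y
    rw [smul_eq_mul]
    congr 1
    have hreal : ‖w‖ * ⟪xh, y⟫ = ⟪y, w⟫ := by
      rw [hxh_def, real_inner_smul_left, real_inner_comm]
      field_simp
    have hsum : (∑ i, (xh i : ℂ) * (y i : ℂ)) = ((⟪xh, y⟫ : ℝ) : ℂ) := by
      rw [show ⟪xh, y⟫ = ∑ i, xh i * y i from by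
        simp [PiLp.inner_apply, RCLike.inner_apply, conj_trivial, mul_comm]]
      push_cast
      ring
    rw [hsum]
    congr 1
    have hrc := congrArg (fun r : ℝ => (r : ℂ)) hreal
    push_cast at hrc ⊢
    linear_combination (2 * (π : ℂ) * Complex.I) * hrc
  have hx₀U : x₀ ∈ U := by rw [hVU] at hx₀V; exact hx₀V.1
  have hx₀n : ‖x₀‖ = 1 := by
    rw [hVU] at hx₀V
    exact mem_sphere_zero_iff_norm.1 hx₀V.2
  set w₀ : E3 := (c / 2) • x₀ with hw₀_def
  have hw₀n : ‖w₀‖ = c / 2 := by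
    rw [hw₀_def, norm_smul, Real.norm_eq_abs, _root_.abs_of_pos (by linarith), hx₀n, mul_one]
  have hw₀ : w₀ ∈ C := by
    refine ⟨by rw [hw₀n]; linarith, by rw [hw₀n]; linarith, ?_⟩
    rw [hw₀n, hw₀_def, smul_smul, inv_mul_cancel₀ (by linarith : c / 2 ≠ 0), one_smul]
    exact hx₀U
  have hEq : Set.EqOn (𝓕 f) 0 Set.univ :=
    hana.eqOn_zero_of_preconnected_of_eventuallyEq_zero isPreconnected_univ (Set.mem_univ w₀)
      (Filter.eventuallyEq_of_mem (hCopen.mem_nhds hw₀) hvanC)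
  exact aux_inj f hfi fun w => hEq (Set.mem_univ w)
end
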